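/- arXiv:1202.5515 — 2 statements merged into one kernel-verified Lean document; each statement's English description precedes it below -/
import Mathlib

section
/- Let m be an integer and suppose r, s are integers with r² - m·s² = -1. Then m is a sum of two squares. -/
theorem sum_of_two_squares_of_negPell (m r s : ℤ)
    (h : r ^ 2 - m * s ^ 2 = -1) :
    ∃ a b : ℤ, m = a ^ 2 + b ^ 2 := by
  have hs : s ≠ 0 := by
    rintro rfl
    simp at h
    nlinarith [sq_nonneg r]
  have hm : 0 < m := by nlinarith [sq_nonneg r, sq_nonneg s, sq_pos_of_ne_zero hs]
  have hdvd : m ∣ r ^ 2 + 1 := ⟨s ^ 2, by linarith⟩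
  have hn : (m.toNat : ℤ) = m := Int.toNat_of_nonneg hm.le
  have hsq : IsSquare (-1 : ZMod m.toNat) := by
    refine ⟨(r : ZMod m.toNat), ?_⟩
    have : ((r ^ 2 + 1 : ℤ) : ZMod m.toNat) = 0 := by
      rw [ZMod.intCast_zmod_eq_zero_iff_dvd]
      rwa [hn]
    push_cast at this
    linear_combination -this
  obtain ⟨x, y, hxy⟩ := Nat.eq_sq_add_sq_of_isSquare_mod_neg_one hsq
  exact ⟨x, y, by rw [← hn]; exact_mod_cast congrArg (Nat.cast : ℕ → ℤ) hxy⟩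
end

section
/- Let m ≡ 1 (mod 4) be a squarefree positive integer. If the negative Pell equation T² - mU² = -4 has an integral solution, then there exist integers a, b, x, y with m = a² + 4b² and bx² + axy - by² = 1. -/
open Zsqrtd GaussianInt

lemma norm_dvd_normG {a b : GaussianInt} (h : a ∣ b) : a.norm ∣ b.norm := by
  obtain ⟨c, rfl⟩ := h; exact ⟨c.norm, (Zsqrtd.norm_mul a c)⟩

lemma star_dvd_starG {a b : GaussianInt} (h : a ∣ b) : star a ∣ star b := by
  obtain ⟨c, rfl⟩ := h; exact ⟨star c, by rw [star_mul, mul_comm]⟩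

lemma prime_starG {π : GaussianInt} (h : Prime π) : Prime (star π) := by
  refine ⟨by simpa using h.1, ?_, ?_⟩
  · rw [← Zsqrtd.norm_eq_one_iff, Zsqrtd.norm_conj, Zsqrtd.norm_eq_one_iff]
    exact h.2.1
  · intro a b hab
    have h1 : π ∣ star a * star b := by
      have := star_dvd_starG hab
      rwa [star_star, star_mul, mul_comm] at this
    rcases h.2.2 _ _ h1 with hh | hh
    · exact Or.inl (by simpa using star_dvd_starG hh)
    · exact Or.inr (by simpa using star_dvd_starG hh)

lemma descentG (m : ℤ) : ∀ n : ℕ, ∀ z : GaussianInt, ∀ V : ℤ, V.natAbs = n →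
    Odd z.norm → IsCoprime z.re z.im → z.norm = m * V ^ 2 →
    ∃ δ σ : GaussianInt, z = δ * σ ^ 2 ∧ δ.norm = m := by
  intro n
  induction n using Nat.strong_induction_on with
  | _ n ih =>
  intro z V hVn hodd hprim hN
  have hV0 : V ≠ 0 := by
    rintro rfl
    simp only [ne_eq, OfNat.ofNat_ne_zero, not_false_eq_true, zero_pow, mul_zero] at hN
    rw [hN] at hodd
    rcases hodd with ⟨j, hj⟩; omega
  by_cases hV1 : V.natAbs = 1
  · have : V ^ 2 = 1 := by
      rcases Int.natAbs_eq_iff.mp hV1 with h | h <;> rw [h] <;> ring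
    exact ⟨z, 1, by ring, by rw [hN, this, mul_one]⟩
  · -- find an odd integer prime p dividing V
    obtain ⟨p0, hp0, hp0V⟩ := Int.exists_prime_and_dvd hV1
    set q : ℕ := p0.natAbs with hq
    have hqprime : Nat.Prime q := Int.prime_iff_natAbs_prime.mp hp0
    set p : ℤ := (q : ℤ) with hpdef
    have hpprime : Prime p := Int.prime_iff_natAbs_prime.mpr (by simpa [hpdef])
    have hpV : p ∣ V := by rw [hpdef]; exact Int.natAbs_dvd.mpr hp0V
    have hpN : p ∣ z.norm := hN ▸ Dvd.dvd.mul_left (dvd_pow hpV two_ne_zero) m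
    have hpodd : ¬ (2 : ℤ) ∣ p := by
      intro h2
      obtain ⟨k, hk⟩ := dvd_trans h2 hpN
      rcases hodd with ⟨j, hj⟩; omega
    -- p does not divide z nor star z
    have hpz : ¬ ((p : GaussianInt) ∣ z) := by
      intro hdvd
      rw [Zsqrtd.intCast_dvd] at hdvd
      exact hpprime.not_unit (hprim.isUnit_of_dvd' hdvd.1 hdvd.2)
    have hpzs : ¬ ((p : GaussianInt) ∣ star z) := by
      intro hdvd
      rw [Zsqrtd.intCast_dvd, Zsqrtd.re_star, Zsqrtd.im_star, dvd_neg] at hdvd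
      exact hpprime.not_unit (hprim.isUnit_of_dvd' hdvd.1 hdvd.2)
    have hzzs : z * star z = ((z.norm : ℤ) : GaussianInt) := (Zsqrtd.norm_eq_mul_conj z).symm
    have hnpG : ¬ Prime ((p : GaussianInt)) := by
      intro hP
      have : (p : GaussianInt) ∣ z * star z := by
        rw [hzzs]; exact (Zsqrtd.intCast_dvd_intCast _ _).mpr hpN
      rcases hP.2.2 _ _ this with h | h
      · exact hpz h
      · exact hpzs h
    -- get a prime factor π of p in ℤ[i] with norm p
    have hpG0 : (p : GaussianInt) ≠ 0 := Int.cast_ne_zero.mpr hpprime.ne_zero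
    have hpGu : ¬ IsUnit ((p : GaussianInt)) := by
      rw [← Zsqrtd.norm_eq_one_iff]
      have : ((p:GaussianInt)).norm = p * p := by
        simp [Zsqrtd.norm]
      rw [this, Int.natAbs_mul]
      have h1 : q ≠ 1 := hqprime.ne_one
      have h2 : p.natAbs = q := by simp [hpdef]
      rw [h2]
      intro hcon
      exact h1 (Nat.eq_one_of_mul_eq_one_right hcon)
    obtain ⟨π, hπirr, hπp⟩ := WfDvdMonoid.exists_irreducible_factor hpGu hpG0
    have hπ : Prime π := hπirr.prime
    obtain ⟨μ, hμ⟩ := hπp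
    have hnormeq : π.norm * μ.norm = p * p := by
      rw [← Zsqrtd.norm_mul, ← hμ]; simp [Zsqrtd.norm]
    have hπnorm : π.norm = p := by
      have hnn : 0 ≤ π.norm := Zsqrtd.norm_nonneg (by norm_num) π
      have hdvd : π.norm.natAbs ∣ q ^ 2 := by
        have : π.norm ∣ p * p := Dvd.intro _ hnormeq
        have := Int.natAbs_dvd_natAbs.mpr this
        simpa [Int.natAbs_mul, sq, hpdef] using this
      obtain ⟨i, hi2, hieq⟩ := (Nat.dvd_prime_pow hqprime).mp hdvd
      interval_cases i
      · exact absurd (Zsqrtd.norm_eq_one_iff.mp (by simpa using hieq)) hπirr.not_isUnit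
      · rw [← Int.natAbs_of_nonneg hnn, hieq]; simp [hpdef]
      · exfalso
        have hμu : IsUnit μ := by
          rw [← Zsqrtd.norm_eq_one_iff]
          have h1 : π.norm.natAbs * μ.norm.natAbs = q ^ 2 := by
            rw [← Int.natAbs_mul, hnormeq]; simp [sq, Int.natAbs_mul, hpdef]
          rw [hieq] at h1
          have hq2 : 0 < q ^ 2 := pow_pos hqprime.pos 2
          nlinarith [hq2]
        have hassoc : Associated π ((p : GaussianInt)) :=
          ⟨hμu.unit, by rw [hμu.unit_spec]; exact hμ.symm⟩
        exact hnpG (hassoc.prime hπ)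
    have hππ : π * star π = (p : GaussianInt) := by
      rw [← Zsqrtd.norm_eq_mul_conj, hπnorm]
    -- choose a prime ρ with ρ ∣ z and ρ * star ρ = p
    have hρex : ∃ ρ : GaussianInt, Prime ρ ∧ ρ ∣ z ∧ ρ * star ρ = (p : GaussianInt) := by
      have hd : π ∣ z * star z := by
        rw [hzzs]
        exact dvd_trans ⟨star π, hππ.symm⟩ ((Zsqrtd.intCast_dvd_intCast _ _).mpr hpN)
      rcases hπ.2.2 _ _ hd with h | h
      · exact ⟨π, hπ, h, hππ⟩
      · refine ⟨star π, prime_starG hπ, ?_, ?_⟩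
        · have := star_dvd_starG h; rwa [star_star] at this
        · rw [star_star, mul_comm]; exact hππ
    obtain ⟨ρ, hρ, hρz, hρρ⟩ := hρex
    have hρnorm : ρ.norm = p := by
      have h1 := (Zsqrtd.norm_eq_mul_conj ρ).trans hρρ
      exact_mod_cast h1
    have hppos : 0 < p := by
      rw [hpdef]; exact_mod_cast hqprime.pos
    have h2p : (2:ℤ) ≤ p := by rw [hpdef]; exact_mod_cast hqprime.two_le
    have hpd2 : ¬ p ∣ (2:ℤ) := by
      intro hd
      have hh := Int.natAbs_dvd_natAbs.mpr hd
      simp [hpdef] at hh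
      have hq2 : q = 2 := (Nat.prime_dvd_prime_iff_eq hqprime Nat.prime_two).mp hh
      exact hpodd (by rw [hpdef, hq2]; norm_num)
    have hsρz : ¬ star ρ ∣ z := by
      intro hsz
      by_cases hps : ρ ∣ star ρ
      · -- ρ and star ρ associated: impossible for odd p
        have hd1 : ρ ∣ (↑(2 * ρ.re) : GaussianInt) := by
          have he : ρ + star ρ = (↑(2 * ρ.re) : GaussianInt) := by
            ext <;> simp [Zsqrtd.re_star, Zsqrtd.im_star] <;> ring
          rw [← he]
          exact dvd_add dvd_rfl hps
        have hd2 : ρ ∣ star ρ - ρ := dvd_sub hps dvd_rfl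
        have hn1 : p ∣ (2 * ρ.re) * (2 * ρ.re) := by
          have h2 := norm_dvd_normG hd1
          rw [hρnorm] at h2
          simpa [Zsqrtd.norm] using h2
        have hn2 : p ∣ (2 * ρ.im) * (2 * ρ.im) := by
          have h2 := norm_dvd_normG hd2
          rw [hρnorm] at h2
          have he : (star ρ - ρ).norm = (2 * ρ.im) * (2 * ρ.im) := by
            simp only [Zsqrtd.norm, Zsqrtd.re_sub, Zsqrtd.im_sub, Zsqrtd.re_star, Zsqrtd.im_star]
            ring
          rwa [he] at h2
        have hre : p ∣ ρ.re := by
          rcases (hpprime.dvd_mul).mp hn1 with h | h <;>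
          · rcases (hpprime.dvd_mul).mp h with h' | h'
            · exact absurd h' hpd2
            · exact h'
        have him : p ∣ ρ.im := by
          rcases (hpprime.dvd_mul).mp hn2 with h | h <;>
          · rcases (hpprime.dvd_mul).mp h with h' | h'
            · exact absurd h' hpd2
            · exact h'
        have hpp : p * p ∣ p := by
          have h3 : p * p ∣ ρ.re * ρ.re + ρ.im * ρ.im :=
            dvd_add (mul_dvd_mul hre hre) (mul_dvd_mul him him)
          have h4 : ρ.re * ρ.re + ρ.im * ρ.im = p := by
            rw [← hρnorm]; simp only [Zsqrtd.norm]; ring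
          rwa [h4] at h3
        have := Int.le_of_dvd hppos hpp
        nlinarith
      · -- not associated: then p divides z, contradiction
        have hsρρ : ¬ star ρ ∣ ρ := by
          intro hd
          obtain ⟨c, hc⟩ := hd
          have hcn : p * c.norm = p := by
            have h5 := congrArg Zsqrtd.norm hc
            rw [Zsqrtd.norm_mul, Zsqrtd.norm_conj, hρnorm] at h5
            exact h5.symm
          have hcu : IsUnit c := by
            rw [← Zsqrtd.norm_eq_one_iff' (by norm_num : (-1:ℤ) ≤ 0)]
            exact mul_left_cancel₀ (ne_of_gt hppos) (hcn.trans (mul_one p).symm)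
          obtain ⟨u, rfl⟩ := hcu
          have h6 := congrArg (· * ((u⁻¹ : GaussianIntˣ) : GaussianInt)) hc
          simp only [mul_assoc, Units.mul_inv, mul_one] at h6
          exact hps ⟨_, h6.symm⟩
        obtain ⟨w1, hw1⟩ := hρz
        have hw1d : star ρ ∣ w1 := by
          rcases (prime_starG hρ).2.2 ρ w1 (hw1 ▸ hsz) with h | h
          · exact absurd h hsρρ
          · exact h
        obtain ⟨w2, hw2⟩ := hw1d
        exact hpz ⟨w2, by rw [hw1, hw2, ← hρρ]; ring⟩
    -- now do the descent
    obtain ⟨V', hV'⟩ := hpV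
    have hp2 : z.norm = p ^ 2 * (m * V' ^ 2) := by rw [hN, hV']; ring
    have hsρ : Prime (star ρ) := prime_starG hρ
    have hsρp : star ρ ∣ ((p : GaussianInt)) := ⟨ρ, by rw [mul_comm]; exact hρρ.symm⟩
    have hsz' : star ρ ∣ star z := by
      have h1 : star ρ ∣ z * star z := by
        rw [hzzs]
        exact dvd_trans hsρp ((Zsqrtd.intCast_dvd_intCast _ _).mpr ⟨p * m * V' ^ 2, by rw [hp2]; ring⟩)
      rcases hsρ.2.2 _ _ h1 with h | h
      · exact absurd h hsρz
      · exact h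
    obtain ⟨s, hs⟩ := hsz'
    have hss : star ρ ∣ s := by
      have hsq : (star ρ) * (star ρ) ∣ z * star z := by
        refine dvd_trans (mul_dvd_mul hsρp hsρp) ?_
        rw [hzzs]
        have hppdvd : p * p ∣ z.norm := ⟨m * V' ^ 2, by rw [hp2]; ring⟩
        have h6 : ((p * p : ℤ) : GaussianInt) ∣ ((z.norm : ℤ) : GaussianInt) :=
          (Zsqrtd.intCast_dvd_intCast _ _).mpr hppdvd
        rwa [Int.cast_mul] at h6
      have h2 : z * star z = star ρ * (z * s) := by rw [hs]; ring
      rw [h2] at hsq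
      have h3 : star ρ ∣ z * s := (mul_dvd_mul_iff_left hsρ.ne_zero).mp hsq
      rcases hsρ.2.2 _ _ h3 with h | h
      · exact absurd h hsρz
      · exact h
    obtain ⟨s2, hs2⟩ := hss
    have hzw : z = ρ ^ 2 * star s2 := by
      have h4 : star z = (star ρ) ^ 2 * s2 := by rw [hs, hs2]; ring
      have h5 := congrArg star h4
      rw [star_star] at h5
      rw [h5]
      simp only [star_mul, star_pow, star_star]
      ring
    set w : GaussianInt := star s2 with hw
    have h1 : z.norm = p ^ 2 * w.norm := by
      rw [hzw, Zsqrtd.norm_mul, sq, Zsqrtd.norm_mul, hρnorm]; ring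
    have hpne : p ≠ 0 := ne_of_gt hppos
    have hwnorm : w.norm = m * V' ^ 2 := by
      have h7 := hp2.symm.trans h1
      exact (mul_left_cancel₀ (pow_ne_zero 2 hpne) h7).symm
    have hwodd : Odd w.norm := by
      rcases Int.even_or_odd w.norm with he | ho
      · exfalso
        rcases he with ⟨k, hk⟩
        rcases hodd with ⟨j, hj⟩
        have h8 : z.norm = 2 * (p ^ 2 * k) := by rw [h1, hk]; ring
        omega
      · exact ho
    have hwprim : IsCoprime w.re w.im := by
      rw [Int.isCoprime_iff_gcd_eq_one]
      by_contra hg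
      obtain ⟨r, hrp, hrd⟩ := Int.exists_prime_and_dvd
        (n := (Int.gcd w.re w.im : ℤ)) (by simpa using hg)
      have hr1 : r ∣ w.re := dvd_trans hrd (Int.gcd_dvd_left _ _)
      have hr2 : r ∣ w.im := dvd_trans hrd (Int.gcd_dvd_right _ _)
      have h9 : (r : GaussianInt) ∣ z :=
        dvd_trans ((Zsqrtd.intCast_dvd _ _).mpr ⟨hr1, hr2⟩) ⟨ρ ^ 2, by rw [hzw]; ring⟩
      rw [Zsqrtd.intCast_dvd] at h9
      exact hrp.not_unit (hprim.isUnit_of_dvd' h9.1 h9.2)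
    have hVne : V' ≠ 0 := by
      rintro rfl
      rw [mul_zero] at hV'
      exact hV0 hV'
    have hlt : V'.natAbs < n := by
      rw [← hVn, hV', Int.natAbs_mul]
      have hpq : p.natAbs = q := by simp [hpdef]
      rw [hpq]
      have hone : 1 ≤ V'.natAbs := Nat.one_le_iff_ne_zero.mpr (Int.natAbs_ne_zero.mpr hVne)
      have hq2 : 2 ≤ q := hqprime.two_le
      nlinarith
    obtain ⟨δ, σ, hfac, hδ⟩ := ih V'.natAbs hlt w V' rfl hwodd hwprim hwnorm
    exact ⟨δ, ρ * σ, by rw [hzw, hfac]; ring, hδ⟩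

theorem Qb_of_negPell (m : ℤ) (hm : 0 < m) (hsf : Squarefree m)
    (hmod : m % 4 = 1) (h : ∃ T U : ℤ, T ^ 2 - m * U ^ 2 = -4) :
    ∃ a b x y : ℤ, m = a ^ 2 + 4 * b ^ 2 ∧
      b * x ^ 2 + a * x * y - b * y ^ 2 = 1 := by
  obtain ⟨T, U, h⟩ := h
  rcases Int.even_or_odd T with hTe | hTo
  · -- T even : reduce to t^2 - m u^2 = -1
    obtain ⟨T2, hT2⟩ := hTe
    have hUe : Even U := by
      rcases Int.even_or_odd U with hU | hU
      · exact hU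
      · exfalso
        obtain ⟨u2, hu2⟩ := hU
        have e : 4*(T2^2) - 4*(m*u2^2) - 4*(m*u2) - m = -4 := by
          rw [hT2, hu2] at h; linear_combination h
        obtain ⟨P, Q, R, hPQR⟩ : ∃ P Q R : ℤ,
            4*P - 4*Q - 4*R - m = -4 := ⟨_, _, _, e⟩
        omega
    obtain ⟨u2, hu2⟩ := hUe
    have ht : T2 ^ 2 - m * u2 ^ 2 = -1 := by
      have e4 : (4:ℤ) * (T2 ^ 2 - m * u2 ^ 2) = 4 * (-1) := by
        rw [hT2, hu2] at h; linear_combination h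
      exact mul_left_cancel₀ (by norm_num) e4
    have hT2e : Even T2 := by
      rcases Int.even_or_odd T2 with hE | hO
      · exact hE
      · exfalso
        obtain ⟨s, hs⟩ := hO
        rcases Int.even_or_odd u2 with ⟨v, hv⟩ | ⟨v, hv⟩
        · have e : 4*(m*v^2) = 4*(s^2) + 4*s + 2 := by
            rw [hs, hv] at ht; linear_combination -ht
          obtain ⟨P, Q, hPQ⟩ : ∃ P Q : ℤ, 4*P = 4*Q + 4*s + 2 := ⟨_, _, e⟩
          omega
        · have e : 4*(m*v^2) + 4*(m*v) + m = 4*(s^2) + 4*s + 2 := by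
            rw [hs, hv] at ht; linear_combination -ht
          obtain ⟨P, Q, R, hPQR⟩ : ∃ P Q R : ℤ,
              4*P + 4*Q + m = 4*R + 4*s + 2 := ⟨_, _, _, e⟩
          omega
    obtain ⟨r, hr⟩ := hT2e
    have hnv : (⟨T2, 1⟩ : GaussianInt).norm = T2 * T2 + 1 := by
      simp only [Zsqrtd.norm]; ring
    have hodd : Odd (⟨T2, 1⟩ : GaussianInt).norm := by
      rw [hnv]; exact ⟨2*r^2, by rw [hr]; ring⟩
    have hN : (⟨T2, 1⟩ : GaussianInt).norm = m * u2 ^ 2 := by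
      rw [hnv]; linear_combination ht
    obtain ⟨δ, σ, hfac, hδ⟩ :=
      descentG m u2.natAbs ⟨T2, 1⟩ u2 rfl hodd isCoprime_one_right hN
    obtain ⟨A, B⟩ := δ
    obtain ⟨x, y⟩ := σ
    rw [pow_two] at hfac
    have h9 := congrArg Zsqrtd.im hfac
    simp only [Zsqrtd.im_mul, Zsqrtd.re_mul] at h9
    have him : A * (2*(x*y)) + B * (x^2 - y^2) = 1 := by
      linear_combination -h9
    have hδnorm : A ^ 2 + B ^ 2 = m := by
      simp only [Zsqrtd.norm] at hδ; linear_combination hδ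
    have hmodd : m % 2 = 1 := by omega
    have hBodd : Odd B := by
      rcases Int.even_or_odd B with ⟨β, hβ⟩ | hO
      · exfalso
        obtain ⟨w, hw⟩ : ∃ w : ℤ, w + w = 1 :=
          ⟨A*(x*y) + β*(x^2-y^2), by rw [hβ] at him; linear_combination him⟩
        omega
      · exact hO
    have hAeven : Even A := by
      rcases Int.even_or_odd A with hE | ⟨α, hα⟩
      · exact hE
      · exfalso
        obtain ⟨β, hβ⟩ := hBodd
        have e : m = 2*(2*α^2 + 2*α + 2*β^2 + 2*β + 1) := by
          rw [hα, hβ] at hδnorm; linear_combination -hδnorm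
        obtain ⟨t, htm⟩ : ∃ t : ℤ, m = 2*t := ⟨_, e⟩
        omega
    obtain ⟨α, hα⟩ := hAeven
    refine ⟨B, α, x + y, x - y, ?_, ?_⟩
    · rw [hα] at hδnorm; linear_combination -hδnorm
    · rw [hα] at him; linear_combination him
  · -- T odd
    obtain ⟨k, hk⟩ := hTo
    have hnv : (⟨T, 2⟩ : GaussianInt).norm = T * T + 4 := by
      simp only [Zsqrtd.norm]; ring
    have hodd : Odd (⟨T, 2⟩ : GaussianInt).norm := by
      rw [hnv]; exact ⟨2*k^2 + 2*k + 2, by rw [hk]; ring⟩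
    have hN : (⟨T, 2⟩ : GaussianInt).norm = m * U ^ 2 := by
      rw [hnv]; linear_combination h
    have hprim : IsCoprime T (2:ℤ) := ⟨1, -k, by rw [hk]; ring⟩
    obtain ⟨δ, σ, hfac, hδ⟩ :=
      descentG m U.natAbs ⟨T, 2⟩ U rfl hodd hprim hN
    obtain ⟨A, B⟩ := δ
    obtain ⟨x, y⟩ := σ
    rw [pow_two] at hfac
    have h9 := congrArg Zsqrtd.im hfac
    simp only [Zsqrtd.im_mul, Zsqrtd.re_mul] at h9
    have him : A * (2*(x*y)) + B * (x^2 - y^2) = 2 := by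
      linear_combination -h9
    have hδnorm : A ^ 2 + B ^ 2 = m := by
      simp only [Zsqrtd.norm] at hδ; linear_combination hδ
    have hmodd : m % 2 = 1 := by omega
    have hBeven : Even B := by
      rcases Int.even_or_odd B with hE | ⟨β, hβ⟩
      · exact hE
      · exfalso
        -- A must be even since m is odd
        have hAeven : Even A := by
          rcases Int.even_or_odd A with hE | ⟨α, hα⟩
          · exact hE
          · exfalso
            have e : m = 2*(2*α^2 + 2*α + 2*β^2 + 2*β + 1) := by
              rw [hα, hβ] at hδnorm; linear_combination -hδnorm
            obtain ⟨t, htm⟩ : ∃ t : ℤ, m = 2*t := ⟨_, e⟩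
            omega
        obtain ⟨α, hα⟩ := hAeven
        rw [hα, hβ] at him
        rcases Int.even_or_odd x with ⟨s, hs⟩ | ⟨s, hs⟩ <;>
          rcases Int.even_or_odd y with ⟨t, ht⟩ | ⟨t, ht⟩
        · -- x, y even
          obtain ⟨u, v, huv⟩ : ∃ u v : ℤ, 16*u + 4*v = 2 :=
            ⟨α*(s*t), (2*β+1)*(s^2 - t^2), by
              rw [hs, ht] at him; linear_combination him⟩
          omega
        · -- x even, y odd
          obtain ⟨u, v, huv⟩ : ∃ u v : ℤ, 2*u + (2*v + 1) = 2 :=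
            ⟨(α+α)*(x*y), (2*β+1)*(2*(s^2) - 2*t^2 - 2*t - 1) + β, by
              rw [hs, ht] at him; rw [hs, ht]; linear_combination him⟩
          omega
        · -- x odd, y even
          obtain ⟨u, v, huv⟩ : ∃ u v : ℤ, 2*u + (2*v + 1) = 2 :=
            ⟨(α+α)*(x*y), (2*β+1)*(2*(s^2) + 2*s - 2*t^2) + β, by
              rw [hs, ht] at him; rw [hs, ht]; linear_combination him⟩
          omega
        · -- x, y odd
          obtain ⟨c, hc⟩ : Even (s*(s+1)) := Int.even_mul_succ_self s
          obtain ⟨d, hd⟩ : Even (t*(t+1)) := Int.even_mul_succ_self t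
          obtain ⟨u, v, huv⟩ : ∃ u v : ℤ, 4*u + 8*v = 2 :=
            ⟨α*((2*s+1)*(2*t+1)), (2*β+1)*(c - d), by
              rw [hs, ht] at him
              linear_combination him - 4*(2*β+1)*hc + 4*(2*β+1)*hd⟩
          omega
    obtain ⟨β, hβ⟩ := hBeven
    refine ⟨A, β, x, y, ?_, ?_⟩
    · rw [hβ] at hδnorm; linear_combination -hδnorm
    · have e2 : (2:ℤ) * (β * x ^ 2 + A * x * y - β * y ^ 2) = 2 * 1 := by
        rw [hβ] at him; linear_combination him
      exact mul_left_cancel₀ (by norm_num) e2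
end
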